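/- Let X = (ℂ² ∖ {z₁z₂ − 1 = 0}) × ℂ* with the standard symplectic form of ℂ³. Then the functions f₁ = (|z₁|² − |z₂|²)/2, f₂ = log|z₃|, f₃ = log|z₁z₂ − 1| pairwise Poisson commute on X. -/

import Mathlib

/-- Poisson bracket on ℂ³ ≅ ℝ⁶ associated to ω = Σₖ dxₖ∧dyₖ. -/
noncomputable def poisson3 (f g : ℂ × ℂ × ℂ → ℝ) (p : ℂ × ℂ × ℂ) : ℝ :=
  (fderiv ℝ f p (1, 0, 0) * fderiv ℝ g p (Complex.I, 0, 0)
      - fderiv ℝ f p (Complex.I, 0, 0) * fderiv ℝ g p (1, 0, 0))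
    + (fderiv ℝ f p (0, 1, 0) * fderiv ℝ g p (0, Complex.I, 0)
      - fderiv ℝ f p (0, Complex.I, 0) * fderiv ℝ g p (0, 1, 0))
    + (fderiv ℝ f p (0, 0, 1) * fderiv ℝ g p (0, 0, Complex.I)
      - fderiv ℝ f p (0, 0, Complex.I) * fderiv ℝ g p (0, 0, 1))

noncomputable def genF1 (p : ℂ × ℂ × ℂ) : ℝ :=
  (‖p.1‖ ^ 2 - ‖p.2.1‖ ^ 2) / 2
noncomputable def genF2 (p : ℂ × ℂ × ℂ) : ℝ := Real.log ‖p.2.2‖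
noncomputable def genF3 (p : ℂ × ℂ × ℂ) : ℝ := Real.log ‖p.1 * p.2.1 - 1‖

lemma hasFDerivAt_normSq' (w : ℂ) :
    HasFDerivAt Complex.normSq
      (((2*w.re) • Complex.reCLM + (2*w.im) • Complex.imCLM : ℂ →L[ℝ] ℝ)) w := by
  have h1 : HasFDerivAt (fun z : ℂ => z.re * z.re + z.im * z.im)
      (((w.re • Complex.reCLM + w.re • Complex.reCLM) +
        (w.im • Complex.imCLM + w.im • Complex.imCLM) : ℂ →L[ℝ] ℝ)) w :=
    (Complex.reCLM.hasFDerivAt.mul Complex.reCLM.hasFDerivAt).add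
      (Complex.imCLM.hasFDerivAt.mul Complex.imCLM.hasFDerivAt)
  have he : (fun z : ℂ => z.re * z.re + z.im * z.im) = Complex.normSq := by
    funext z; rw [Complex.normSq_apply]
  rw [he] at h1
  convert h1 using 1
  ext v
  simp [ContinuousLinearMap.smul_apply]
  ring

/-- On X = (ℂ² ∖ {z₁z₂ − 1 = 0}) × ℂ*, the functions f₁ = (|z₁|² − |z₂|²)/2,
f₂ = log|z₃|, f₃ = log|z₁z₂ − 1| pairwise Poisson commute. -/
theorem stmt4 :
    ∀ p : ℂ × ℂ × ℂ, p.1 * p.2.1 - 1 ≠ 0 → p.2.2 ≠ 0 →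
      poisson3 genF1 genF2 p = 0 ∧ poisson3 genF1 genF3 p = 0 ∧ poisson3 genF2 genF3 p = 0 := by
  intro p hw h3
  -- rewrite the functions via normSq
  have e1 : genF1 = fun q : ℂ × ℂ × ℂ =>
      (Complex.normSq q.1 - Complex.normSq q.2.1) * (1/2 : ℝ) := by
    funext q; simp only [genF1, Complex.sq_norm]; ring
  have e2 : genF2 = fun q : ℂ × ℂ × ℂ => Real.log (Complex.normSq q.2.2) * (1/2 : ℝ) := by
    funext q
    simp only [genF2, Complex.norm_def]
    rw [Real.log_sqrt (Complex.normSq_nonneg _)]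
    ring
  have e3 : genF3 = fun q : ℂ × ℂ × ℂ =>
      Real.log (Complex.normSq (q.1 * q.2.1 - 1)) * (1/2 : ℝ) := by
    funext q
    simp only [genF3, Complex.norm_def]
    rw [Real.log_sqrt (Complex.normSq_nonneg _)]
    ring
  -- basic projections
  have hfst : HasFDerivAt (fun q : ℂ × ℂ × ℂ => q.1)
      (ContinuousLinearMap.fst ℝ ℂ (ℂ × ℂ)) p := hasFDerivAt_fst
  have hsnd1 : HasFDerivAt (fun q : ℂ × ℂ × ℂ => q.2.1)
      ((ContinuousLinearMap.fst ℝ ℂ ℂ).comp (ContinuousLinearMap.snd ℝ ℂ (ℂ × ℂ))) p :=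
    hasFDerivAt_fst.comp p hasFDerivAt_snd
  have hsnd2 : HasFDerivAt (fun q : ℂ × ℂ × ℂ => q.2.2)
      ((ContinuousLinearMap.snd ℝ ℂ ℂ).comp (ContinuousLinearMap.snd ℝ ℂ (ℂ × ℂ))) p :=
    hasFDerivAt_snd.comp p hasFDerivAt_snd
  -- derivative of genF1
  have h1 : HasFDerivAt genF1
      ((1/2 : ℝ) • (((2*p.1.re) • Complex.reCLM + (2*p.1.im) • Complex.imCLM).comp
          (ContinuousLinearMap.fst ℝ ℂ (ℂ × ℂ))
        - ((2*p.2.1.re) • Complex.reCLM + (2*p.2.1.im) • Complex.imCLM).comp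
          ((ContinuousLinearMap.fst ℝ ℂ ℂ).comp (ContinuousLinearMap.snd ℝ ℂ (ℂ × ℂ))))) p := by
    rw [e1]
    exact (((hasFDerivAt_normSq' p.1).comp p hfst).sub
      ((hasFDerivAt_normSq' p.2.1).comp p hsnd1)).mul_const (1/2 : ℝ)
  -- derivative of genF2
  have h2 : HasFDerivAt genF2
      ((1/2 : ℝ) • ((Complex.normSq p.2.2)⁻¹ •
        (((2*p.2.2.re) • Complex.reCLM + (2*p.2.2.im) • Complex.imCLM).comp
          ((ContinuousLinearMap.snd ℝ ℂ ℂ).comp (ContinuousLinearMap.snd ℝ ℂ (ℂ × ℂ)))))) p := by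
    rw [e2]
    exact (((hasFDerivAt_normSq' p.2.2).comp p hsnd2).log
      (by simpa [Complex.normSq_eq_zero] using h3)).mul_const (1/2 : ℝ)
  -- derivative of z₁z₂ - 1
  have hmul : HasFDerivAt (fun q : ℂ × ℂ × ℂ => q.1 * q.2.1 - 1)
      (p.1 • ((ContinuousLinearMap.fst ℝ ℂ ℂ).comp (ContinuousLinearMap.snd ℝ ℂ (ℂ × ℂ)))
        + p.2.1 • (ContinuousLinearMap.fst ℝ ℂ (ℂ × ℂ))) p :=
    (hfst.mul hsnd1).sub_const 1
  have h3' : HasFDerivAt genF3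
      ((1/2 : ℝ) • ((Complex.normSq (p.1 * p.2.1 - 1))⁻¹ •
        (((2*(p.1 * p.2.1 - 1).re) • Complex.reCLM
            + (2*(p.1 * p.2.1 - 1).im) • Complex.imCLM).comp
          (p.1 • ((ContinuousLinearMap.fst ℝ ℂ ℂ).comp (ContinuousLinearMap.snd ℝ ℂ (ℂ × ℂ)))
            + p.2.1 • (ContinuousLinearMap.fst ℝ ℂ (ℂ × ℂ)))))) p := by
    rw [e3]
    exact (((hasFDerivAt_normSq' (p.1 * p.2.1 - 1)).comp p hmul).log
      (by simpa [Complex.normSq_eq_zero] using hw)).mul_const (1/2 : ℝ)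
  simp only [poisson3, h1.fderiv, h2.fderiv, h3'.fderiv]
  simp only [ContinuousLinearMap.mul_apply, ContinuousLinearMap.smul_apply,
    ContinuousLinearMap.add_apply, ContinuousLinearMap.sub_apply,
    ContinuousLinearMap.comp_apply, ContinuousLinearMap.coe_fst',
    ContinuousLinearMap.coe_snd', Complex.reCLM_apply, Complex.imCLM_apply,
    Complex.smul_re, Complex.smul_im, Complex.mul_re, Complex.mul_im,
    Complex.I_re, Complex.I_im, Complex.one_re, Complex.one_im,
    Complex.zero_re, Complex.zero_im, smul_eq_mul]
  refine ⟨?_, ?_, ?_⟩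
  · ring
  · simp [Complex.mul_re, Complex.mul_im]
    ring
  · simp [Complex.mul_re, Complex.mul_im]
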